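/- Let A = [[1,1],[2,0]] (period doubling) and G := {v ∈ ℚ² : Aⁿ v ∈ ℤ² for some n ∈ ℕ}. There is no additive group homomorphism s : G → ℤ with s(1, −2) = 1. Equivalently, the injection ψ : ℤ → G, ψ(k) = k·(1, −2), admits no retraction, so the short exact sequence 0 → ℤ → G → G/ψ(ℤ) → 0 does not split. -/

import Mathlib

def xseq (n : ℕ) : Fin 2 → ℚ :=
  ![2/3/2^n + (-1)^n/3, 2/3/2^n - 2*(-1)^n/3]

lemma xseq_step (n : ℕ) :
    (!![(1 : ℚ), 1; 2, 0]).mulVec (xseq (n+1)) = xseq n := by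
  funext i
  fin_cases i <;>
    simp [xseq, Matrix.mulVec, dotProduct, Fin.sum_univ_two, pow_succ] <;> ring

lemma xseq_pow (n : ℕ) :
    ((!![(1 : ℚ), 1; 2, 0]) ^ n).mulVec (xseq n) = ![1, 0] := by
  induction n with
  | zero =>
    funext i
    fin_cases i <;> simp [xseq] <;> norm_num
  | succ n ih =>
    rw [pow_succ, ← Matrix.mulVec_mulVec, xseq_step, ih]

lemma xseq_rel (n : ℕ) :
    xseq n - 2 • xseq (n+1) = ((-1 : ℤ)^n : ℤ) • ![(1 : ℚ), -2] := by
  funext i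
  fin_cases i <;>
    simp [xseq, pow_succ, Pi.smul_apply, zsmul_eq_mul] <;> ring

/-- Let `A = [[1,1],[2,0]]` (period doubling) and `G = {v ∈ ℚ² : Aⁿ v ∈ ℤ² for some n}`.
There is no additive group homomorphism `s : G → ℤ` with `s(1, −2) = 1`; i.e. the
injection `ψ : ℤ → G`, `ψ(k) = k·(1, −2)`, admits no retraction, so the short exact
sequence `0 → ℤ → G → G/ψ(ℤ) → 0` does not split. -/
theorem stmt17 (G : AddSubgroup (Fin 2 → ℚ))
    (hG : (G : Set (Fin 2 → ℚ)) =
      {v | ∃ n : ℕ, ∀ i, ∃ z : ℤ, ((!![(1 : ℚ), 1; 2, 0]) ^ n).mulVec v i = (z : ℚ)})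
    (hmem : ![(1 : ℚ), -2] ∈ G) :
    ¬ ∃ s : G →+ ℤ, s ⟨![(1 : ℚ), -2], hmem⟩ = 1 := by
  rintro ⟨s, hs⟩
  have hx : ∀ n, xseq n ∈ G := by
    intro n
    have : xseq n ∈ (G : Set (Fin 2 → ℚ)) := by
      rw [hG]
      refine ⟨n, fun i => ?_⟩
      rw [xseq_pow]
      fin_cases i
      · exact ⟨1, by norm_num⟩
      · exact ⟨0, by norm_num⟩
    exact this
  set c : ℕ → ℤ := fun n => s ⟨xseq n, hx n⟩ with hc
  have hrec : ∀ n, c n = 2 * c (n+1) + (-1)^n := by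
    intro n
    have key : (⟨xseq n, hx n⟩ : G) - 2 • (⟨xseq (n+1), hx (n+1)⟩ : G)
        = ((-1 : ℤ)^n) • (⟨![(1 : ℚ), -2], hmem⟩ : G) := by
      apply Subtype.ext
      push_cast
      exact xseq_rel n
    have h2 := congrArg s key
    rw [map_sub, map_nsmul, map_zsmul, hs] at h2
    simp only [smul_eq_mul, mul_one, nsmul_eq_mul] at h2
    push_cast at h2
    simp only [hc]
    linarith [h2]
  have hmain : ∀ n, 3 * c 0 = 1 - (-2)^n + 3 * 2^n * c n := by
    intro n
    induction n with
    | zero => simp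
    | succ n ih =>
      have h2 : ((-2 : ℤ))^n = (-1)^n * 2^n := by
        rw [show (-2 : ℤ) = -1 * 2 by norm_num, mul_pow]
      calc 3 * c 0 = 1 - (-2)^n + 3 * 2^n * c n := ih
        _ = 1 - (-2)^n + 3 * 2^n * (2 * c (n+1) + (-1)^n) := by rw [← hrec n]
        _ = 1 - (-2)^(n+1) + 3 * 2^(n+1) * c (n+1) := by
            rw [pow_succ (-2 : ℤ), pow_succ (2 : ℤ), h2]; ring
  -- choose N large
  set N : ℕ := (3 * c 0).natAbs + 1 with hN
  have hPN : ((3 * c 0).natAbs + 1 : ℤ) < 2^N := by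
    have := Nat.lt_two_pow_self (n := N)
    exact_mod_cast this
  have habs : |3 * c 0| + 1 < 2^N := by
    rw [Int.abs_eq_natAbs]
    exact_mod_cast hPN
  have hE : |(-2 : ℤ)^N| = 2^N := by
    rw [abs_pow]; norm_num
  have hcN : c N = 0 := by
    by_contra hne
    have heq := hmain N
    have hE1 : -(2^N : ℤ) ≤ (-2)^N := by
      have := abs_le.mp hE.le
      linarith [(abs_le.mp (le_of_eq hE)).1]
    have hE2 : ((-2 : ℤ))^N ≤ 2^N := (le_abs_self _).trans hE.le
    have hE1' : -(2^N : ℤ) ≤ (-2)^N := neg_abs_le ((-2 : ℤ)^N) |>.trans_eq' (by rw [hE])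
    have hb1 : 3 * c 0 ≤ |3 * c 0| := le_abs_self _
    have hb2 : -|3 * c 0| ≤ 3 * c 0 := neg_abs_le _
    have hP0 : (0 : ℤ) < 2^N := by positivity
    rcases lt_or_gt_of_ne hne with hlt | hgt
    · have h1 : c N ≤ -1 := by omega
      have : 3 * 2^N * c N ≤ 3 * 2^N * (-1) :=
        mul_le_mul_of_nonneg_left h1 (by positivity)
      linarith
    · have h1 : 1 ≤ c N := by omega
      have : 3 * 2^N * 1 ≤ 3 * 2^N * c N :=
        mul_le_mul_of_nonneg_left h1 (by positivity)
      linarith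
  have hrecN := hrec N
  rw [hcN] at hrecN
  rcases Nat.even_or_odd N with h | h
  · rw [h.neg_one_pow] at hrecN; omega
  · rw [h.neg_one_pow] at hrecN; omega
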